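/- If T is an orthogonal matrix in ℝ^{n×n} with 3 ≤ α < n that maps C_α into C_α, then T is a signed permutation matrix: there is a permutation σ of {1,…,n} and signs ε_j ∈ {−1,1} such that the j-th column of T equals ε_j · e_{σ(j)}. -/

import Mathlib

noncomputable def code (n α : ℕ) : Set (EuclideanSpace ℝ (Fin n)) :=
  {c | (∀ i, c i = 0 ∨ c i = 1 / Real.sqrt α ∨ c i = -(1 / Real.sqrt α)) ∧
       (Finset.univ.filter (fun i => c i ≠ 0)).card = α}

lemma aux_signed_sum {n α : ℕ} (hα : 3 ≤ α)
    (T : Matrix (Fin n) (Fin n) ℝ)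
    (hmap : ∀ c ∈ code n α, (WithLp.toLp 2 (T.mulVec c) : EuclideanSpace ℝ (Fin n)) ∈ code n α)
    (i : Fin n) (S : Finset (Fin n)) (hS : S.card = α)
    (ε : Fin n → ℝ) (hε : ∀ j, ε j = 1 ∨ ε j = -1) :
    ∑ j ∈ S, ε j * T i j = 0 ∨ ∑ j ∈ S, ε j * T i j = 1 ∨ ∑ j ∈ S, ε j * T i j = -1 := by
  classical
  have hs0 : (0:ℝ) < Real.sqrt α := Real.sqrt_pos.mpr (by positivity)
  have hs0' : Real.sqrt α ≠ 0 := ne_of_gt hs0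
  set c : EuclideanSpace ℝ (Fin n) := WithLp.toLp 2 (fun j => if j ∈ S then ε j / Real.sqrt α else 0) with hc
  have hεne : ∀ j, ε j ≠ 0 := by
    intro j; rcases hε j with h | h <;> rw [h] <;> norm_num
  have hcmem : c ∈ code n α := by
    constructor
    · intro k
      by_cases hk : k ∈ S
      · rcases hε k with h | h
        · right; left; simp [hc, hk, h]
        · right; right; simp [hc, hk, h]; ring
      · left; simp [hc, hk]
    · have hfe : (Finset.univ.filter fun k => c k ≠ 0) = S := by
        ext k
        simp only [Finset.mem_filter, Finset.mem_univ, true_and, hc]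
        by_cases hk : k ∈ S
        · simp [hk, div_ne_zero (hεne k) hs0']
        · simp [hk]
      rw [hfe, hS]
  have hmem := hmap c hcmem
  have hval : T.mulVec c i = (∑ j ∈ S, ε j * T i j) / Real.sqrt α := by
    simp only [Matrix.mulVec, dotProduct, hc, WithLp.ofLp_toLp, mul_ite, mul_zero,
      Finset.sum_ite_mem, Finset.univ_inter, Finset.sum_div]
    exact Finset.sum_congr rfl (fun j _ => by ring)
  rcases hmem.1 i with h | h | h
  · left
    rw [WithLp.ofLp_toLp, hval] at h
    field_simp at h
    linarith
  · right; left
    rw [WithLp.ofLp_toLp, hval] at h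
    field_simp at h
    linarith
  · right; right
    rw [WithLp.ofLp_toLp, hval] at h
    field_simp at h
    linarith

lemma aux_abs_sum {n α : ℕ} (hα : 3 ≤ α)
    (T : Matrix (Fin n) (Fin n) ℝ)
    (hmap : ∀ c ∈ code n α, (WithLp.toLp 2 (T.mulVec c) : EuclideanSpace ℝ (Fin n)) ∈ code n α)
    (i : Fin n) (S : Finset (Fin n)) (hS : S.card = α) :
    ∑ j ∈ S, |T i j| = 0 ∨ ∑ j ∈ S, |T i j| = 1 := by
  classical
  set ε : Fin n → ℝ := fun l => if T i l < 0 then -1 else 1 with hεdef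
  have hε : ∀ l, ε l = 1 ∨ ε l = -1 := by
    intro l; by_cases h : T i l < 0 <;> simp [hεdef, h]
  have habs : ∀ l, ε l * T i l = |T i l| := by
    intro l; by_cases h : T i l < 0
    · simp [hεdef, h, abs_of_neg h]
    · simp [hεdef, h, abs_of_nonneg (not_lt.mp h)]
  have hsum : ∑ j ∈ S, ε j * T i j = ∑ j ∈ S, |T i j| :=
    Finset.sum_congr rfl (fun j _ => habs j)
  have hnn : (0:ℝ) ≤ ∑ j ∈ S, |T i j| :=
    Finset.sum_nonneg (fun j _ => abs_nonneg _)
  rcases aux_signed_sum hα T hmap i S hS ε hε with h | h | h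
  · left; rw [← hsum]; exact h
  · right; rw [← hsum]; exact h
  · exfalso; rw [hsum] at h; linarith

lemma aux_entry {n α : ℕ} (hα : 3 ≤ α) (hαn : α < n)
    (T : Matrix (Fin n) (Fin n) ℝ)
    (hmap : ∀ c ∈ code n α, (WithLp.toLp 2 (T.mulVec c) : EuclideanSpace ℝ (Fin n)) ∈ code n α)
    (i j : Fin n) :
    |T i j| = 0 ∨ |T i j| = 1/2 ∨ |T i j| = 1 := by
  classical
  obtain ⟨S, hjS, -, hScard⟩ :=
    Finset.exists_subsuperset_card_eq (n := α) (Finset.subset_univ {j})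
      (by rw [Finset.card_singleton]; omega)
      (by rw [Finset.card_univ, Fintype.card_fin]; omega)
  have hjmem : j ∈ S := hjS (Finset.mem_singleton_self j)
  set ε : Fin n → ℝ := fun l => if T i l < 0 then -1 else 1 with hεdef
  have hε : ∀ l, ε l = 1 ∨ ε l = -1 := by
    intro l; by_cases h : T i l < 0 <;> simp [hεdef, h]
  have habs : ∀ l, ε l * T i l = |T i l| := by
    intro l; by_cases h : T i l < 0
    · simp [hεdef, h, abs_of_neg h]
    · simp [hεdef, h, abs_of_nonneg (not_lt.mp h)]
  set ε' : Fin n → ℝ := fun l => if l = j then -(ε l) else ε l with hε'def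
  have hε' : ∀ l, ε' l = 1 ∨ ε' l = -1 := by
    intro l
    by_cases h : l = j
    · subst h
      rcases hε l with h2 | h2
      · right; simp [hε'def, h2]
      · left; simp [hε'def, h2]
    · simpa [hε'def, h] using hε l
  have h1 := aux_signed_sum hα T hmap i S hScard ε hε
  have h2 := aux_signed_sum hα T hmap i S hScard ε' hε'
  have e1 : ∑ l ∈ S, ε l * T i l = |T i j| + ∑ l ∈ S.erase j, ε l * T i l := by
    rw [← habs j]
    exact (Finset.add_sum_erase _ (fun l => ε l * T i l) hjmem).symm
  have e2 : ∑ l ∈ S, ε' l * T i l = -|T i j| + ∑ l ∈ S.erase j, ε l * T i l := by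
    rw [← Finset.add_sum_erase _ (fun l => ε' l * T i l) hjmem]
    have : ε' j * T i j = -|T i j| := by simp [hε'def, habs j]
    rw [this]
    congr 1
    refine Finset.sum_congr rfl (fun l hl => ?_)
    have : l ≠ j := Finset.ne_of_mem_erase hl
    simp [hε'def, this]
  have habs0 : (0:ℝ) ≤ |T i j| := abs_nonneg _
  rw [e1] at h1; rw [e2] at h2
  rcases h1 with h1 | h1 | h1 <;> rcases h2 with h2 | h2 | h2
  · left; linarith
  · exfalso; linarith
  · right; left; linarith
  · right; left; linarith
  · left; linarith
  · right; right; linarith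
  · exfalso; linarith
  · exfalso; linarith
  · left; linarith

lemma aux_no_half {n α : ℕ} (hα : 3 ≤ α) (hαn : α < n)
    (T : Matrix (Fin n) (Fin n) ℝ)
    (hmap : ∀ c ∈ code n α, (WithLp.toLp 2 (T.mulVec c) : EuclideanSpace ℝ (Fin n)) ∈ code n α)
    (i j : Fin n) : |T i j| ≠ 1/2 := by
  classical
  intro h2
  -- every (α-1)-set avoiding j sums to 1/2
  have g : ∀ B : Finset (Fin n), j ∉ B → B.card = α - 1 →
      ∑ l ∈ B, |T i l| = 1/2 := by
    intro B hjB hBcard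
    have hScard : (insert j B).card = α := by
      rw [Finset.card_insert_of_notMem hjB, hBcard]; omega
    have hsum : ∑ l ∈ insert j B, |T i l| = 1/2 + ∑ l ∈ B, |T i l| := by
      rw [Finset.sum_insert hjB, h2]
    have hnn : (0:ℝ) ≤ ∑ l ∈ B, |T i l| :=
      Finset.sum_nonneg (fun l _ => abs_nonneg _)
    rcases aux_abs_sum hα T hmap i (insert j B) hScard with h | h <;>
      rw [hsum] at h <;> linarith
  -- all entries away from j have equal absolute value
  have heq : ∀ b b', b ≠ j → b' ≠ j → |T i b| = |T i b'| := by
    intro b b' hb hb'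
    by_cases hbb' : b = b'
    · rw [hbb']
    · have hsub : ({b} : Finset (Fin n)) ⊆ Finset.univ \ {j, b'} := by
        intro x hx
        simp only [Finset.mem_singleton] at hx
        subst hx
        simp [Finset.mem_sdiff, hb, hbb']
      have hcard2 : ({j, b'} : Finset (Fin n)).card = 2 := by
        rw [Finset.card_insert_of_notMem (by simp [Ne.symm hb']), Finset.card_singleton]
      have hcardsd : (Finset.univ \ ({j, b'} : Finset (Fin n))).card = n - 2 := by
        rw [Finset.card_sdiff_of_subset (Finset.subset_univ _), hcard2, Finset.card_univ, Fintype.card_fin]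
      obtain ⟨B, hbB, hBsub, hBcard⟩ :=
        Finset.exists_subsuperset_card_eq (n := α - 1) hsub
          (by rw [Finset.card_singleton]; omega) (by rw [hcardsd]; omega)
      have hbmem : b ∈ B := hbB (Finset.mem_singleton_self b)
      have hjB : j ∉ B := by
        intro h; have := hBsub h; simp [Finset.mem_sdiff] at this
      have hb'B : b' ∉ B := by
        intro h; have := hBsub h; simp [Finset.mem_sdiff] at this
      have hg1 := g B hjB hBcard
      set B' := insert b' (B.erase b) with hB'def
      have hb'not : b' ∉ B.erase b := fun h => hb'B (Finset.mem_of_mem_erase h)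
      have hjB' : j ∉ B' := by
        simp only [hB'def, Finset.mem_insert]
        push_neg
        exact ⟨Ne.symm hb', fun h => hjB (Finset.mem_of_mem_erase h)⟩
      have hB'card : B'.card = α - 1 := by
        rw [hB'def, Finset.card_insert_of_notMem hb'not, Finset.card_erase_of_mem hbmem,
          hBcard]
        omega
      have hg2 := g B' hjB' hB'card
      have e1 : ∑ l ∈ B, |T i l| = |T i b| + ∑ l ∈ B.erase b, |T i l| :=
        (Finset.add_sum_erase _ _ hbmem).symm
      have e2 : ∑ l ∈ B', |T i l| = |T i b'| + ∑ l ∈ B.erase b, |T i l| :=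
        Finset.sum_insert hb'not
      rw [e1] at hg1; rw [e2] at hg2
      linarith
  -- choose a set B₀ of size α-1 avoiding j
  have hcardsd1 : (Finset.univ \ ({j} : Finset (Fin n))).card = n - 1 := by
    rw [Finset.card_sdiff_of_subset (Finset.subset_univ _), Finset.card_singleton, Finset.card_univ,
      Fintype.card_fin]
  obtain ⟨B₀, hB₀sub, hB₀card⟩ :=
    Finset.exists_subset_card_eq (s := Finset.univ \ ({j} : Finset (Fin n))) (n := α - 1)
      (by rw [hcardsd1]; omega)
  have hB₀ne : B₀.Nonempty := by
    rw [← Finset.card_pos, hB₀card]; omega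
  obtain ⟨b₀, hb₀⟩ := hB₀ne
  have hb₀j : b₀ ≠ j := by
    have := hB₀sub hb₀; simp [Finset.mem_sdiff] at this; exact this
  have hconst : ∑ l ∈ B₀, |T i l| = (α - 1 : ℕ) * |T i b₀| := by
    rw [Finset.sum_congr rfl (fun l hl => ?_), Finset.sum_const, hB₀card, nsmul_eq_mul]
    have hlj : l ≠ j := by
      have := hB₀sub hl; simp [Finset.mem_sdiff] at this; exact this
    exact heq l b₀ hlj hb₀j
  have hg := g B₀ (fun h => by have := hB₀sub h; simp [Finset.mem_sdiff] at this) hB₀card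
  rw [hconst] at hg
  have hcast : (2:ℝ) ≤ (α - 1 : ℕ) := by
    have : (2:ℕ) ≤ α - 1 := by omega
    exact_mod_cast this
  rcases aux_entry hα hαn T hmap i b₀ with h | h | h <;> rw [h] at hg <;> nlinarith

theorem stmt_5 (n α : ℕ) (hα : 3 ≤ α) (hαn : α < n)
    (T : Matrix (Fin n) (Fin n) ℝ) (hT : T ∈ Matrix.orthogonalGroup (Fin n) ℝ)
    (hmap : ∀ c ∈ code n α, (WithLp.toLp 2 (T.mulVec c) : EuclideanSpace ℝ (Fin n)) ∈ code n α) :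
    ∃ σ : Equiv.Perm (Fin n), ∃ ε : Fin n → ℝ, (∀ j, ε j = 1 ∨ ε j = -1) ∧
      ∀ i j, T i j = if i = σ j then ε j else 0 := by
  classical
  have hentry : ∀ i j, T i j = 0 ∨ T i j = 1 ∨ T i j = -1 := by
    intro i j
    rcases aux_entry hα hαn T hmap i j with h | h | h
    · left; exact abs_eq_zero.mp h
    · exact absurd h (aux_no_half hα hαn T hmap i j)
    · rcases (abs_eq (by norm_num : (0:ℝ) ≤ 1)).mp h with h | h
      · right; left; exact h
      · right; right; exact h
  have hTT : star T * T = 1 := (Matrix.mem_orthogonalGroup_iff' (Fin n) ℝ).mp hT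
  have key : ∀ j j', (∑ k, T k j * T k j') = if j = j' then (1:ℝ) else 0 := by
    intro j j'
    have h := congrFun (congrFun hTT j) j'
    simpa [Matrix.mul_apply, Matrix.star_apply, Matrix.one_apply] using h
  set N : Fin n → Finset (Fin n) := fun j => Finset.univ.filter (fun i => T i j ≠ 0) with hN
  have hNcard : ∀ j, (N j).card = 1 := by
    intro j
    have h1 : ∑ k, T k j * T k j = 1 := by simpa using key j j
    have h2 : ∑ k, T k j * T k j = ∑ k ∈ N j, T k j * T k j := by
      symm
      apply Finset.sum_subset (Finset.filter_subset _ _)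
      intro x _ hx
      simp only [hN, Finset.mem_filter, Finset.mem_univ, true_and, not_not] at hx
      rw [hx]; ring
    have h3 : ∑ k ∈ N j, T k j * T k j = (N j).card := by
      rw [Finset.sum_congr rfl (fun k hk => ?_), Finset.sum_const, nsmul_eq_mul, mul_one]
      have hk0 : T k j ≠ 0 := by
        simp only [hN, Finset.mem_filter, Finset.mem_univ, true_and] at hk; exact hk
      rcases hentry k j with h | h | h
      · exact absurd h hk0
      · rw [h]; norm_num
      · rw [h]; norm_num
    have h4 : ((N j).card : ℝ) = 1 := by rw [← h3, ← h2, h1]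
    exact_mod_cast h4
  choose σ0 hσ0 using fun j => Finset.card_eq_one.mp (hNcard j)
  have hnz : ∀ j, T (σ0 j) j ≠ 0 := by
    intro j
    have hmem : σ0 j ∈ N j := by rw [hσ0 j]; exact Finset.mem_singleton_self _
    simpa only [hN, Finset.mem_filter, Finset.mem_univ, true_and] using hmem
  have hzero : ∀ i j, i ≠ σ0 j → T i j = 0 := by
    intro i j hij
    by_contra h
    have hmem : i ∈ N j := by
      simp only [hN, Finset.mem_filter, Finset.mem_univ, true_and]; exact h
    rw [hσ0 j] at hmem
    exact hij (Finset.mem_singleton.mp hmem)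
  have hinj : Function.Injective σ0 := by
    intro j j' hjj'
    by_contra hne
    have h0 := key j j'
    rw [if_neg hne] at h0
    have hsum : ∑ k, T k j * T k j' = T (σ0 j) j * T (σ0 j) j' := by
      apply Finset.sum_eq_single (σ0 j)
      · intro b _ hb
        rw [hzero b j hb]; ring
      · intro hmem; exact absurd (Finset.mem_univ _) hmem
    rw [hsum] at h0
    exact mul_ne_zero (hnz j) (by rw [hjj']; exact hnz j') h0
  have hbij := Finite.injective_iff_bijective.mp hinj
  refine ⟨Equiv.ofBijective σ0 hbij, fun j => T (σ0 j) j, ?_, ?_⟩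
  · intro j
    rcases hentry (σ0 j) j with h | h | h
    · exact absurd h (hnz j)
    · left; exact h
    · right; exact h
  · intro i j
    have hcoe : (Equiv.ofBijective σ0 hbij) j = σ0 j := rfl
    rw [hcoe]
    by_cases h : i = σ0 j
    · rw [if_pos h, h]
    · rw [if_neg h]; exact hzero i j h
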